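/- Let c and v be points of the Euclidean plane with dist(c,v) = r, where r > 0, and let 0 < s ≤ 2r. Then the Lebesgue area of the intersection of the open ball of radius r centered at c with the open ball of radius s centered at v equals −r·s·√(1 − s²/(4r²)) + (2r² − s²)·arcsin(s/(2r)) + π·s²/2. -/

import Mathlib

open Real MeasureTheory Metric

section helpers
open Set


lemma ftc_circ (a b C : ℝ) (ha : 0 < a) (hb : -a ≤ b) (hbc : b ≤ C) (hc : C ≤ a) :
    ∫ x in b..C, 2 * Real.sqrt (a^2 - x^2)
      = (C * Real.sqrt (a^2 - C^2) + a^2 * Real.arcsin (C / a))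
        - (b * Real.sqrt (a^2 - b^2) + a^2 * Real.arcsin (b / a)) := by
  have hcont : Continuous fun x : ℝ => 2 * Real.sqrt (a^2 - x^2) := by fun_prop
  refine intervalIntegral.integral_eq_sub_of_hasDerivAt_of_le
    (f := fun x => x * Real.sqrt (a^2-x^2) + a^2 * Real.arcsin (x/a)) hbc ?_ ?_ (hcont.intervalIntegrable b C)
  · exact (((continuous_id.mul (by fun_prop : Continuous fun x:ℝ => Real.sqrt (a^2-x^2))).add
      (continuous_const.mul (Real.continuous_arcsin.comp (continuous_id.div_const a)))).continuousOn)
  · intro x hx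
    have hxa : -a < x := lt_of_le_of_lt hb hx.1
    have hxa' : x < a := lt_of_lt_of_le hx.2 hc
    have hpos : 0 < a^2 - x^2 := by nlinarith
    have h1 : HasDerivAt (fun x : ℝ => a^2 - x^2) (-(2*x^1)) x := by
      simpa using (hasDerivAt_pow 2 x).const_sub (a^2)
    have hsq : HasDerivAt (fun x => Real.sqrt (a^2 - x^2))
        (1/(2*Real.sqrt (a^2-x^2)) * -(2*x^1)) x :=
      (Real.hasDerivAt_sqrt hpos.ne').comp x h1
    have hmul : HasDerivAt (fun x => x * Real.sqrt (a^2-x^2))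
        (1 * Real.sqrt (a^2-x^2) + x * (1/(2*Real.sqrt (a^2-x^2)) * -(2*x^1))) x :=
      (hasDerivAt_id x).mul hsq
    have hne1 : x / a ≠ -1 := by
      intro h
      have : x = -a := by field_simp at h; linarith
      linarith
    have hne2 : x / a ≠ 1 := by
      intro h
      field_simp at h
      linarith
    have hdiv : HasDerivAt (fun x : ℝ => x / a) (1/a) x := (hasDerivAt_id x).div_const a
    have harc : HasDerivAt (fun x => Real.arcsin (x / a))
        (1 / Real.sqrt (1 - (x/a)^2) * (1/a)) x :=
      by have h := (Real.hasDerivAt_arcsin hne1 hne2).comp x hdiv; exact h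
    have final := hmul.add (harc.const_mul (a^2))
    convert final using 1
    · rfl
    have hkey : Real.sqrt (1 - (x/a)^2) = Real.sqrt (a^2 - x^2) / a := by
      rw [show (1 : ℝ) - (x/a)^2 = (a^2 - x^2)/a^2 by field_simp,
        Real.sqrt_div hpos.le, Real.sqrt_sq ha.le]
    have hne : Real.sqrt (a^2 - x^2) ≠ 0 := (Real.sqrt_pos.mpr hpos).ne'
    have hsq2 : Real.sqrt (a^2 - x^2) ^ 2 = a^2 - x^2 := Real.sq_sqrt hpos.le
    rw [hkey]
    field_simp
    linear_combination hsq2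

lemma arcsin_one_sub_two_sq (t : ℝ) (h0 : 0 ≤ t) (h1 : t ≤ 1) :
    Real.arcsin (1 - 2 * t^2) = π/2 - 2 * Real.arcsin t := by
  have ht2 : t^2 ≤ 1 := by nlinarith
  have hcos : Real.cos (2 * Real.arcsin t) = 1 - 2 * t^2 := by
    rw [Real.cos_two_mul, Real.cos_arcsin, Real.sq_sqrt (by linarith)]
    ring
  have h0' : 0 ≤ 2 * Real.arcsin t := by
    have := Real.arcsin_nonneg.mpr h0; linarith
  have h1' : 2 * Real.arcsin t ≤ π := by
    have := Real.arcsin_le_pi_div_two t; linarith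
  rw [Real.arcsin_eq_pi_div_two_sub_arccos, ← hcos, Real.arccos_cos h0' h1']

set_option maxHeartbeats 1000000 in
lemma lens_volume (r s : ℝ) (hr : 0 < r) (hs : 0 < s) (hs2r : s ≤ 2 * r) :
    volume {q : ℝ × ℝ | q.1^2 + q.2^2 < r^2 ∧ (q.1 - r)^2 + q.2^2 < s^2} =
      ENNReal.ofReal
        (-(r * s * Real.sqrt (1 - s ^ 2 / (4 * r ^ 2)))
          + (2 * r ^ 2 - s ^ 2) * Real.arcsin (s / (2 * r))
          + Real.pi * s ^ 2 / 2) := by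
  set f : ℝ → ℝ := fun x => min (Real.sqrt (r^2 - x^2)) (Real.sqrt (s^2 - (x - r)^2)) with hf
  have hfc : Continuous f := by
    apply Continuous.min <;> fun_prop
  have hfnn : ∀ x, 0 ≤ f x := fun x => le_min (Real.sqrt_nonneg _) (Real.sqrt_nonneg _)
  have hset : {q : ℝ × ℝ | q.1^2 + q.2^2 < r^2 ∧ (q.1 - r)^2 + q.2^2 < s^2}
      = regionBetween (-f) f (Ioo (r - s) r) := by
    ext ⟨x, y⟩
    simp only [regionBetween, mem_setOf_eq, mem_Ioo, Pi.neg_apply]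
    constructor
    · rintro ⟨h1, h2⟩
      have hA : 0 < r^2 - x^2 := by nlinarith
      have hB : 0 < s^2 - (x - r)^2 := by nlinarith
      have hy1 : |y| < Real.sqrt (r^2 - x^2) := by
        rw [← Real.sqrt_sq_eq_abs]
        exact Real.sqrt_lt_sqrt (sq_nonneg y) (by nlinarith)
      have hy2 : |y| < Real.sqrt (s^2 - (x - r)^2) := by
        rw [← Real.sqrt_sq_eq_abs]
        exact Real.sqrt_lt_sqrt (sq_nonneg y) (by nlinarith)
      have hxr : x < r := by nlinarith
      have hxl : r - s < x := by nlinarith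
      have habs : |y| < f x := lt_min hy1 hy2
      rcases abs_lt.mp habs with ⟨hl, hrr⟩
      exact ⟨⟨hxl, hxr⟩, by simpa using hl, hrr⟩
    · rintro ⟨⟨hxl, hxr⟩, hyl, hyr⟩
      have habs : |y| < f x := abs_lt.mpr ⟨by simpa using hyl, hyr⟩
      have hy1 : |y| < Real.sqrt (r^2 - x^2) := lt_of_lt_of_le habs (min_le_left _ _)
      have hy2 : |y| < Real.sqrt (s^2 - (x - r)^2) := lt_of_lt_of_le habs (min_le_right _ _)
      have hA : 0 < r^2 - x^2 := Real.sqrt_pos.mp (lt_of_le_of_lt (abs_nonneg y) hy1)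
      have hB : 0 < s^2 - (x - r)^2 := Real.sqrt_pos.mp (lt_of_le_of_lt (abs_nonneg y) hy2)
      constructor
      · nlinarith [Real.sq_sqrt hA.le, sq_abs y, abs_nonneg y, Real.sqrt_nonneg (r^2 - x^2)]
      · nlinarith [Real.sq_sqrt hB.le, sq_abs y, abs_nonneg y, Real.sqrt_nonneg (s^2 - (x-r)^2)]
  have hint : IntegrableOn f (Ioo (r - s) r) volume :=
    (hfc.integrableOn_Icc (a := r - s) (b := r)).mono_set Ioo_subset_Icc_self
  rw [hset, Measure.volume_eq_prod,
    volume_regionBetween_eq_integral (hint.neg) hint measurableSet_Ioo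
      (fun x _ => by simpa using by linarith [hfnn x] : ∀ x ∈ Ioo (r-s) r, (-f) x ≤ f x)]
  have hI : ∫ y in Ioo (r - s) r, (f - (-f)) y = ∫ x in (r-s)..r, 2 * f x := by
    rw [intervalIntegral.integral_of_le (by linarith), integral_Ioc_eq_integral_Ioo]
    apply setIntegral_congr_fun measurableSet_Ioo
    intro x _
    simp [two_mul]
  rw [hI]
  set x₀ : ℝ := r - s^2/(2*r) with hx₀
  have hWnn : (0:ℝ) ≤ 1 - s^2/(4*r^2) := by
    rw [sub_nonneg, div_le_one (by positivity)]
    nlinarith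
  set W : ℝ := Real.sqrt (1 - s^2/(4*r^2)) with hWdef
  have h1 : r - s ≤ x₀ := by
    rw [hx₀, sub_le_sub_iff_left, div_le_iff₀ (by linarith)]
    nlinarith
  have h2 : x₀ ≤ r := by
    rw [hx₀]
    have : 0 ≤ s^2/(2*r) := by positivity
    linarith
  have hii : ∀ a b : ℝ, IntervalIntegrable (fun x => 2 * f x) volume a b :=
    fun a b => (continuous_const.mul hfc).intervalIntegrable a b
  have hsplit : (∫ x in (r-s)..x₀, 2 * f x) + (∫ x in x₀..r, 2 * f x)
      = ∫ x in (r-s)..r, 2 * f x :=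
    intervalIntegral.integral_add_adjacent_intervals (hii _ _) (hii _ _)
  have hsW : Real.sqrt (s^2 * (1 - s^2/(4*r^2))) = s * W := by
    rw [Real.sqrt_mul (sq_nonneg s), Real.sqrt_sq hs.le]
  -- first piece
  have e1 : (∫ x in (r-s)..x₀, 2 * f x)
      = -(s^2/(2*r)) * (s*W) + s^2 * (-Real.arcsin (s/(2*r))) + s^2 * (π/2) := by
    have ec : (∫ x in (r-s)..x₀, 2 * f x)
        = ∫ x in (r-s)..x₀, 2 * Real.sqrt (s^2 - (x - r)^2) := by
      apply intervalIntegral.integral_congr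
      intro x hx
      rw [Set.uIcc_of_le h1, Set.mem_Icc] at hx
      have hx2 := hx.2
      rw [hx₀] at hx2
      have key : 2*r*(r - s^2/(2*r)) = 2*r^2 - s^2 := by field_simp
      have h2rx : 2*r*x ≤ 2*r^2 - s^2 :=
        key ▸ mul_le_mul_of_nonneg_left hx2 (by linarith)
      have hle : s^2 - (x - r)^2 ≤ r^2 - x^2 := by nlinarith [h2rx]
      simp [hf, min_eq_right (Real.sqrt_le_sqrt hle)]
    have esub := intervalIntegral.integral_comp_sub_right
      (a := r - s) (b := x₀) (fun u => 2 * Real.sqrt (s^2 - u^2)) r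
    rw [show r - s - r = -s from by ring, show x₀ - r = -(s^2/(2*r)) from by rw [hx₀]; ring] at esub
    have hb1 : -s ≤ -(s^2/(2*r)) := by
      rw [neg_le_neg_iff, div_le_iff₀ (by linarith)]
      nlinarith
    have hb2 : -(s^2/(2*r)) ≤ s := by
      have : 0 ≤ s^2/(2*r) := by positivity
      linarith
    have := ftc_circ s (-s) (-(s^2/(2*r))) hs le_rfl hb1 hb2
    rw [ec, esub, this]
    rw [show s^2 - (-(s^2/(2*r)))^2 = s^2 * (1 - s^2/(4*r^2)) from by field_simp; ring, hsW,
      show s^2 - (-s)^2 = 0 from by ring, Real.sqrt_zero,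
      show (-(s^2/(2*r)))/s = -(s/(2*r)) from by field_simp,
      show (-s)/s = -1 from by field_simp,
      Real.arcsin_neg, Real.arcsin_neg_one]
    ring
  -- second piece
  have e2 : (∫ x in x₀..r, 2 * f x)
      = r^2 * (π/2) - (x₀ * (s*W) + r^2 * (π/2 - 2 * Real.arcsin (s/(2*r)))) := by
    have ec : (∫ x in x₀..r, 2 * f x) = ∫ x in x₀..r, 2 * Real.sqrt (r^2 - x^2) := by
      apply intervalIntegral.integral_congr
      intro x hx
      rw [Set.uIcc_of_le h2, Set.mem_Icc] at hx
      have hx1 := hx.1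
      rw [hx₀] at hx1
      have key : 2*r*(r - s^2/(2*r)) = 2*r^2 - s^2 := by field_simp
      have h2rx : 2*r^2 - s^2 ≤ 2*r*x :=
        key ▸ mul_le_mul_of_nonneg_left hx1 (by linarith)
      have hle : r^2 - x^2 ≤ s^2 - (x - r)^2 := by nlinarith [h2rx]
      simp [hf, min_eq_left (Real.sqrt_le_sqrt hle)]
    have hmr : -r ≤ x₀ := by linarith
    have := ftc_circ r x₀ r hr hmr h2 le_rfl
    rw [ec, this]
    rw [show r^2 - x₀^2 = s^2 * (1 - s^2/(4*r^2)) from by rw [hx₀]; field_simp; ring, hsW,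
      show r^2 - r^2 = 0 from by ring, Real.sqrt_zero,
      show r/r = 1 from div_self hr.ne', Real.arcsin_one,
      show x₀/r = 1 - 2 * (s/(2*r))^2 from by rw [hx₀]; field_simp,
      arcsin_one_sub_two_sq (s/(2*r)) (by positivity) (by rw [div_le_one (by linarith)]; linarith)]
    ring
  rw [← hsplit, e1, e2]
  congr 1
  rw [hx₀]
  field_simp
  ring

end helpers



/-- Area of the intersection of a disk of radius `r` centered at `c` with a disk of
radius `s` centered at a point `v` on the boundary circle of the first disk. -/
theorem area_disk_inter_disk_centered_on_boundary
    (c v : EuclideanSpace ℝ (Fin 2)) (r s : ℝ)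
    (hr : 0 < r) (hs : 0 < s) (hs2r : s ≤ 2 * r) (hcv : dist c v = r) :
    volume (ball c r ∩ ball v s) =
      ENNReal.ofReal
        (-(r * s * Real.sqrt (1 - s ^ 2 / (4 * r ^ 2)))
          + (2 * r ^ 2 - s ^ 2) * Real.arcsin (s / (2 * r))
          + Real.pi * s ^ 2 / 2) := by
  have hvc : ‖v - c‖ = r := by rw [← dist_eq_norm, dist_comm]; exact hcv
  set u : EuclideanSpace ℝ (Fin 2) := r⁻¹ • (v - c) with hu
  have hun : ‖u‖ = 1 := by
    rw [hu, norm_smul, hvc, Real.norm_eq_abs, abs_of_pos (inv_pos.mpr hr)]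
    field_simp
  have hON : Orthonormal ℝ (Set.restrict {0} (fun _ : Fin 2 => u)) := by
    constructor
    · intro i; exact hun
    · intro i j hij
      exact absurd (Subtype.ext (i.2.trans j.2.symm)) hij
  obtain ⟨b, hb⟩ := hON.exists_orthonormalBasis_extension_of_card_eq (by simp)
  have hb0 : b 0 = u := hb 0 rfl
  have hbvc : b.repr (v - c) = EuclideanSpace.single 0 r := by
    have hv : v - c = r • b 0 := by
      rw [hb0, hu, smul_smul]
      field_simp
      rw [one_smul]
    rw [hv, _root_.map_smul, b.repr_self]
    ext i
    by_cases h : i = 0 <;> simp [h, EuclideanSpace.single_apply, PiLp.smul_apply, smul_eq_mul]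
  have hΦmp : MeasurePreserving
      (fun q : ℝ × ℝ => c + b.repr.symm
        ((MeasurableEquiv.toLp 2 (Fin 2 → ℝ)) ((MeasurableEquiv.finTwoArrow).symm q)))
      volume volume :=
    (measurePreserving_add_left volume c).comp
      (b.measurePreserving_repr_symm.comp
        (((EuclideanSpace.volume_preserving_symm_measurableEquiv_toLp (Fin 2)).symm).comp
          ((volume_preserving_finTwoArrow ℝ).symm _)))
  rw [← hΦmp.measure_preimage (measurableSet_ball.inter measurableSet_ball).nullMeasurableSet]
  have hpre : (fun q : ℝ × ℝ => c + b.repr.symm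
        ((MeasurableEquiv.toLp 2 (Fin 2 → ℝ)) ((MeasurableEquiv.finTwoArrow).symm q)))
      ⁻¹' (ball c r ∩ ball v s)
      = {q : ℝ × ℝ | q.1^2 + q.2^2 < r^2 ∧ (q.1 - r)^2 + q.2^2 < s^2} := by
    ext q
    set y : EuclideanSpace ℝ (Fin 2) :=
      (MeasurableEquiv.toLp 2 (Fin 2 → ℝ)) ((MeasurableEquiv.finTwoArrow).symm q) with hy
    have hy0 : y 0 = q.1 := rfl
    have hy1 : y 1 = q.2 := rfl
    have hmem1 : (c + b.repr.symm y ∈ ball c r) ↔ q.1^2 + q.2^2 < r^2 := by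
      rw [mem_ball, dist_eq_norm, add_sub_cancel_left, b.repr.symm.norm_map,
        EuclideanSpace.norm_eq, Real.sqrt_lt' hr]
      simp [Fin.sum_univ_two, hy0, hy1, sq_abs]
    have hmem2 : (c + b.repr.symm y ∈ ball v s) ↔ (q.1 - r)^2 + q.2^2 < s^2 := by
      rw [mem_ball, dist_eq_norm]
      have e1 : c + b.repr.symm y - v = b.repr.symm y - (v - c) := by abel
      have e2 : b.repr.symm y - (v - c) = b.repr.symm (y - EuclideanSpace.single 0 r) := by
        rw [_root_.map_sub, ← hbvc, b.repr.symm_apply_apply]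
      rw [e1, e2, b.repr.symm.norm_map, EuclideanSpace.norm_eq, Real.sqrt_lt' hs]
      have hs0 : ((y - EuclideanSpace.single 0 r : EuclideanSpace ℝ (Fin 2)) 0) = q.1 - r := by
        simp [hy0, EuclideanSpace.single_apply]
      have hs1 : ((y - EuclideanSpace.single 0 r : EuclideanSpace ℝ (Fin 2)) 1) = q.2 := by
        simp [hy1, EuclideanSpace.single_apply]
      rw [Fin.sum_univ_two, hs0, hs1]
      simp [sq_abs]
    simp only [Set.mem_preimage, Set.mem_inter_iff, Set.mem_setOf_eq]
    exact and_congr hmem1 hmem2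
  rw [hpre]
  exact lens_volume r s hr hs hs2r
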